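/- Order identification for violation classes (Lemma 4, violation part): Let φ be an STL formula with a classification criterion fixed as in the context. If (ψ, σ) ∈ ⪯⁻(φ), then the falsifiable sets satisfy V(ψ) ⊆ V(σ), i.e. every signal w for which there exists θ ∈ Θ with w ⊭ ψ(θ) also admits some θ' ∈ Θ with w ⊭ σ(θ'). -/

import Mathlib

namespace STLClass

abbrev Signal (N : ℕ) := ℝ → Fin N → ℝ

def shift {N : ℕ} (w : Signal N) (t : ℝ) : Signal N := fun t' => w (t + t')

inductive STL (N : ℕ) : Type where
  | atom (f : (Fin N → ℝ) → ℝ)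
  | falsum
  | not (φ : STL N)
  | and (φ₁ φ₂ : STL N)
  | or (φ₁ φ₂ : STL N)
  | always (a b : ℝ) (φ : STL N)
  | event (a b : ℝ) (φ : STL N)
  | untl (a b : ℝ) (φ₁ φ₂ : STL N)

def STL.top {N : ℕ} : STL N := .not .falsum

noncomputable def robust {N : ℕ} : STL N → Signal N → EReal
  | .atom f, w => ((f (w 0) : ℝ) : EReal)
  | .falsum, _ => ⊥
  | .not φ, w => - robust φ w
  | .and φ₁ φ₂, w => min (robust φ₁ w) (robust φ₂ w)
  | .or φ₁ φ₂, w => max (robust φ₁ w) (robust φ₂ w)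
  | .always a b φ, w => ⨅ t : Set.Icc a b, robust φ (shift w t.1)
  | .event a b φ, w => ⨆ t : Set.Icc a b, robust φ (shift w t.1)
  | .untl a b φ₁ φ₂, w =>
      ⨆ t : Set.Icc a b,
        min (robust φ₂ (shift w t.1)) (⨅ t' : Set.Ico (0 : ℝ) t.1, robust φ₁ (shift w t'.1))

def Sat {N : ℕ} (w : Signal N) (φ : STL N) : Prop := 0 < robust φ w

def Vio {N : ℕ} (w : Signal N) (φ : STL N) : Prop := robust φ w < 0

/-- An STL formula together with a classification criterion: each temporal operator is
annotated with a natural number `k`, meaning that its interval is split into `k + 1`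
consecutive segments (so the "positive integer" of the criterion is `k + 1`). -/
inductive AForm (N : ℕ) : Type where
  | atom (f : (Fin N → ℝ) → ℝ)
  | falsum
  | not (φ : AForm N)
  | and (φ₁ φ₂ : AForm N)
  | or (φ₁ φ₂ : AForm N)
  | always (a b : ℝ) (k : ℕ) (φ : AForm N)
  | event (a b : ℝ) (k : ℕ) (φ : AForm N)
  | untl (a b : ℝ) (k : ℕ) (φ₁ φ₂ : AForm N)

/-- The underlying STL formula of an annotated formula. -/
def AForm.toSTL {N : ℕ} : AForm N → STL N
  | .atom f => .atom f
  | .falsum => .falsum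
  | .not φ => .not φ.toSTL
  | .and φ₁ φ₂ => .and φ₁.toSTL φ₂.toSTL
  | .or φ₁ φ₂ => .or φ₁.toSTL φ₂.toSTL
  | .always a b _ φ => .always a b φ.toSTL
  | .event a b _ φ => .event a b φ.toSTL
  | .untl a b _ φ₁ φ₂ => .untl a b φ₁.toSTL φ₂.toSTL

/-- Well-formedness: every temporal interval `[a, b]` satisfies `0 ≤ a < b`. -/
def AForm.WF {N : ℕ} : AForm N → Prop
  | .atom _ => True
  | .falsum => True
  | .not φ => φ.WF
  | .and φ₁ φ₂ => φ₁.WF ∧ φ₂.WF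
  | .or φ₁ φ₂ => φ₁.WF ∧ φ₂.WF
  | .always a b _ φ => 0 ≤ a ∧ a < b ∧ φ.WF
  | .event a b _ φ => 0 ≤ a ∧ a < b ∧ φ.WF
  | .untl a b _ φ₁ φ₂ => 0 ≤ a ∧ a < b ∧ φ₁.WF ∧ φ₂.WF

/-- A split of the interval `[a, b]` into `n` consecutive nonsingular segments:
`n + 1` strictly increasing points starting at `a` and ending at `b`.  The segment
`i` is `[pts i.castSucc, pts i.succ]`. -/
structure Split (a b : ℝ) (n : ℕ) : Type where
  pts : Fin (n + 1) → ℝ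
  strictMono : StrictMono pts
  first : pts 0 = a
  last : pts (Fin.last n) = b

/-- The valuation space `Θ` of an annotated formula: a choice of admissible breakpoints
for each temporal subformula. -/
def Val {N : ℕ} : AForm N → Type
  | .atom _ => PUnit
  | .falsum => PUnit
  | .not φ => Val φ
  | .and φ₁ φ₂ => Val φ₁ × Val φ₂
  | .or φ₁ φ₂ => Val φ₁ × Val φ₂
  | .always a b k φ => Split a b (k + 1) × Val φ
  | .event a b k φ => Split a b (k + 1) × Val φ
  | .untl a b k φ₁ φ₂ => Split a b (k + 1) × Val φ₁ × Val φ₂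

/-- Finite conjunction of a list of STL formulas (empty conjunction is `⊤`). -/
def listAnd {N : ℕ} : List (STL N) → STL N
  | [] => STL.top
  | [φ] => φ
  | φ :: φ' :: rest => .and φ (listAnd (φ' :: rest))

/-- Finite disjunction of a list of STL formulas (empty disjunction is `⊥`). -/
def listOr {N : ℕ} : List (STL N) → STL N
  | [] => .falsum
  | [φ] => φ
  | φ :: φ' :: rest => .or φ (listOr (φ' :: rest))

/-- `⋀_{i} f i`. -/
def iAnd {N : ℕ} {k : ℕ} (f : Fin k → STL N) : STL N := listAnd (List.ofFn f)

/-- `⋁_{i} f i`. -/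
def iOr {N : ℕ} {k : ℕ} (f : Fin k → STL N) : STL N := listOr (List.ofFn f)

/-- `Cls true φ` is the set `Cls⁺(φ)` of satisfaction classes and `Cls false φ` is the
set `Cls⁻(φ)` of violation classes; a class is represented by its instantiation map
`Θ → STL N` sending a valuation `θ` to the STL formula `ψ(θ)`. -/
def Cls {N : ℕ} : Bool → (φ : AForm N) → Set (Val φ → STL N)
  | b, .atom f =>
      {fun _ => if b then STL.falsum else STL.top, fun _ => STL.atom f}
  | _, .falsum => {fun _ => STL.falsum}
  | b, .not φ =>
      {c | ∃ ψ ∈ Cls (!b) φ, c = fun θ => STL.not (ψ θ)}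
  | b, .and φ₁ φ₂ =>
      {c | ∃ ψ₁ ∈ Cls b φ₁, ∃ ψ₂ ∈ Cls b φ₂,
        c = fun θ => STL.and (ψ₁ θ.1) (ψ₂ θ.2)}
  | b, .or φ₁ φ₂ =>
      {c | ∃ ψ₁ ∈ Cls b φ₁, ∃ ψ₂ ∈ Cls b φ₂,
        c = fun θ => STL.or (ψ₁ θ.1) (ψ₂ θ.2)}
  | b, .always _ _ k φ =>
      {c | ∃ ψ : Fin (k + 1) → Val φ → STL N, (∀ i, ψ i ∈ Cls b φ) ∧
        c = fun θ => iAnd fun i : Fin (k + 1) =>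
          STL.always (θ.1.pts i.castSucc) (θ.1.pts i.succ) (ψ i θ.2)}
  | b, .event _ _ k φ =>
      {c | ∃ ψ : Fin (k + 1) → Val φ → STL N, (∀ i, ψ i ∈ Cls b φ) ∧
        c = fun θ => iOr fun i : Fin (k + 1) =>
          STL.event (θ.1.pts i.castSucc) (θ.1.pts i.succ) (ψ i θ.2)}
  | b, .untl _ _ k φ₁ φ₂ =>
      {c | ∃ ψ : Fin (k + 1) → Val φ₁ → STL N, ∃ σ : Fin (k + 1) → Val φ₂ → STL N,
           ∃ ξ : Fin (k + 1) → Fin (k + 1) → Val φ₁ → STL N,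
        (∀ i, ψ i ∈ Cls b φ₁) ∧ (∀ i, σ i ∈ Cls b φ₂) ∧ (∀ i j, ξ i j ∈ Cls b φ₁) ∧
        c = fun θ => iOr fun i : Fin (k + 1) =>
          STL.and
            (STL.untl (θ.1.pts i.castSucc) (θ.1.pts i.succ) (ψ i θ.2.1) (σ i θ.2.2))
            (iAnd fun j : Fin (i : ℕ) =>
              STL.always (θ.1.pts (j.castLE i.isLt.le).castSucc)
                (θ.1.pts (j.castLE i.isLt.le).succ) (ξ i (j.castLE i.isLt.le) θ.2.1))}

/-- The satisfiable set `S(ψ)` of a class. -/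
def SatSet {N : ℕ} (φ : AForm N) (ψ : Val φ → STL N) : Set (Signal N) :=
  {w | ∃ θ : Val φ, Sat w (ψ θ)}

/-- The falsifiable set `V(ψ)` of a class. -/
def VioSet {N : ℕ} (φ : AForm N) (ψ : Val φ → STL N) : Set (Signal N) :=
  {w | ∃ θ : Val φ, Vio w (ψ θ)}


/-- `Pre true φ` is the relation `⪯⁺(φ)` and `Pre false φ` is the relation `⪯⁻(φ)`,
given as sets of pairs of classes. -/
def Pre {N : ℕ} : Bool → (φ : AForm N) → Set ((Val φ → STL N) × (Val φ → STL N))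
  | b, .atom f =>
      { (fun _ => if b then STL.falsum else STL.top, fun _ => STL.atom f),
        (fun _ => STL.atom f, fun _ => STL.atom f),
        (fun _ => if b then STL.falsum else STL.top,
         fun _ => if b then STL.falsum else STL.top) }
  | _, .falsum => {(fun _ => STL.falsum, fun _ => STL.falsum)}
  | b, .not φ =>
      {p | ∃ q ∈ Pre (!b) φ,
        p = (fun θ => STL.not (q.1 θ), fun θ => STL.not (q.2 θ))}
  | b, .and φ₁ φ₂ =>
      {p | ∃ q₁ ∈ Pre b φ₁, ∃ q₂ ∈ Pre b φ₂,
        p = (fun θ => STL.and (q₁.1 θ.1) (q₂.1 θ.2),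
             fun θ => STL.and (q₁.2 θ.1) (q₂.2 θ.2))}
  | b, .or φ₁ φ₂ =>
      {p | ∃ q₁ ∈ Pre b φ₁, ∃ q₂ ∈ Pre b φ₂,
        p = (fun θ => STL.or (q₁.1 θ.1) (q₂.1 θ.2),
             fun θ => STL.or (q₁.2 θ.1) (q₂.2 θ.2))}
  | b, .always _ _ k φ =>
      {p | ∃ ψ σ : Fin (k + 1) → Val φ → STL N, (∀ i, (ψ i, σ i) ∈ Pre b φ) ∧
        p = (fun θ => iAnd fun i : Fin (k + 1) =>
               STL.always (θ.1.pts i.castSucc) (θ.1.pts i.succ) (ψ i θ.2),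
             fun θ => iAnd fun i : Fin (k + 1) =>
               STL.always (θ.1.pts i.castSucc) (θ.1.pts i.succ) (σ i θ.2))}
  | b, .event _ _ k φ =>
      {p | ∃ ψ σ : Fin (k + 1) → Val φ → STL N, (∀ i, (ψ i, σ i) ∈ Pre b φ) ∧
        p = (fun θ => iOr fun i : Fin (k + 1) =>
               STL.event (θ.1.pts i.castSucc) (θ.1.pts i.succ) (ψ i θ.2),
             fun θ => iOr fun i : Fin (k + 1) =>
               STL.event (θ.1.pts i.castSucc) (θ.1.pts i.succ) (σ i θ.2))}
  | b, .untl _ _ k φ₁ φ₂ =>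
      {p | ∃ ψ ψ' : Fin (k + 1) → Val φ₁ → STL N,
           ∃ σ σ' : Fin (k + 1) → Val φ₂ → STL N,
           ∃ ξ ξ' : Fin (k + 1) → Fin (k + 1) → Val φ₁ → STL N,
        (∀ i, (ψ i, ψ' i) ∈ Pre b φ₁) ∧ (∀ i, (σ i, σ' i) ∈ Pre b φ₂) ∧
        (∀ i j, (ξ i j, ξ' i j) ∈ Pre b φ₁) ∧
        p = (fun θ => iOr fun i : Fin (k + 1) =>
               STL.and
                 (STL.untl (θ.1.pts i.castSucc) (θ.1.pts i.succ) (ψ i θ.2.1) (σ i θ.2.2))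
                 (iAnd fun j : Fin (i : ℕ) =>
                   STL.always (θ.1.pts (j.castLE i.isLt.le).castSucc)
                     (θ.1.pts (j.castLE i.isLt.le).succ) (ξ i (j.castLE i.isLt.le) θ.2.1)),
             fun θ => iOr fun i : Fin (k + 1) =>
               STL.and
                 (STL.untl (θ.1.pts i.castSucc) (θ.1.pts i.succ) (ψ' i θ.2.1) (σ' i θ.2.2))
                 (iAnd fun j : Fin (i : ℕ) =>
                   STL.always (θ.1.pts (j.castLE i.isLt.le).castSucc)
                     (θ.1.pts (j.castLE i.isLt.le).succ) (ξ' i (j.castLE i.isLt.le) θ.2.1)))}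


/-- Directed comparison: `≤` if `b = true`, `≥` if `b = false`. -/
def Rel (b : Bool) (x y : EReal) : Prop := if b then x ≤ y else y ≤ x

lemma Rel.rfl {b : Bool} {x : EReal} : Rel b x x := by cases b <;> simp [Rel]

lemma Rel.min' {b : Bool} {x y x' y' : EReal} (h : Rel b x y) (h' : Rel b x' y') :
    Rel b (min x x') (min y y') := by
  cases b <;> simp only [Rel, if_true, if_false] at * <;> exact min_le_min h h'

lemma Rel.max' {b : Bool} {x y x' y' : EReal} (h : Rel b x y) (h' : Rel b x' y') :
    Rel b (max x x') (max y y') := by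
  cases b <;> simp only [Rel, if_true, if_false] at * <;> exact max_le_max h h'

lemma Rel.neg' {b : Bool} {x y : EReal} (h : Rel (!b) x y) : Rel b (-x) (-y) := by
  cases b <;> simp only [Rel, Bool.not_true, Bool.not_false, if_true, if_false] at * <;>
    exact EReal.neg_le_neg_iff.mpr h

lemma Rel.iInf' {ι : Sort*} {b : Bool} {f g : ι → EReal} (h : ∀ i, Rel b (f i) (g i)) :
    Rel b (⨅ i, f i) (⨅ i, g i) := by
  cases b <;> simp only [Rel, if_true, if_false] at * <;> exact iInf_mono h

lemma Rel.iSup' {ι : Sort*} {b : Bool} {f g : ι → EReal} (h : ∀ i, Rel b (f i) (g i)) :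
    Rel b (⨆ i, f i) (⨆ i, g i) := by
  cases b <;> simp only [Rel, if_true, if_false] at * <;> exact iSup_mono h

lemma forall₂_ofFn {α : Type*} {R : α → α → Prop} :
    ∀ {k : ℕ} (f g : Fin k → α), (∀ i, R (f i) (g i)) →
      List.Forall₂ R (List.ofFn f) (List.ofFn g) := by
  intro k
  induction k with
  | zero => intro f g _; simp
  | succ n ih =>
    intro f g h
    rw [List.ofFn_succ, List.ofFn_succ]
    exact .cons (h 0) (ih _ _ fun i => h i.succ)

lemma rel_listAnd {N : ℕ} {b : Bool} {w : Signal N} :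
    ∀ (l₁ l₂ : List (STL N)),
      List.Forall₂ (fun p q => Rel b (robust p w) (robust q w)) l₁ l₂ →
      Rel b (robust (listAnd l₁) w) (robust (listAnd l₂) w) := by
  intro l₁
  induction l₁ with
  | nil => intro l₂ h; cases h; exact Rel.rfl
  | cons a l ih =>
    intro l₂ h
    cases h with
    | cons ha ht =>
      cases l with
      | nil => cases ht; simpa [listAnd] using ha
      | cons a' l' =>
        cases ht with
        | cons hb ht' =>
          simp only [listAnd, robust]
          exact Rel.min' ha (ih _ (.cons hb ht'))

lemma rel_listOr {N : ℕ} {b : Bool} {w : Signal N} :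
    ∀ (l₁ l₂ : List (STL N)),
      List.Forall₂ (fun p q => Rel b (robust p w) (robust q w)) l₁ l₂ →
      Rel b (robust (listOr l₁) w) (robust (listOr l₂) w) := by
  intro l₁
  induction l₁ with
  | nil => intro l₂ h; cases h; exact Rel.rfl
  | cons a l ih =>
    intro l₂ h
    cases h with
    | cons ha ht =>
      cases l with
      | nil => cases ht; simpa [listOr] using ha
      | cons a' l' =>
        cases ht with
        | cons hb ht' =>
          simp only [listOr, robust]
          exact Rel.max' ha (ih _ (.cons hb ht'))

lemma rel_iAnd {N : ℕ} {b : Bool} {w : Signal N} {k : ℕ} {f g : Fin k → STL N}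
    (h : ∀ i, Rel b (robust (f i) w) (robust (g i) w)) :
    Rel b (robust (iAnd f) w) (robust (iAnd g) w) :=
  rel_listAnd _ _ (forall₂_ofFn f g h)

lemma rel_iOr {N : ℕ} {b : Bool} {w : Signal N} {k : ℕ} {f g : Fin k → STL N}
    (h : ∀ i, Rel b (robust (f i) w) (robust (g i) w)) :
    Rel b (robust (iOr f) w) (robust (iOr g) w) :=
  rel_listOr _ _ (forall₂_ofFn f g h)

lemma pre_rel {N : ℕ} :
    ∀ (φ : AForm N) (b) (ψ σ : Val φ → STL N), (ψ, σ) ∈ Pre b φ →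
      ∀ (θ : Val φ) (w : Signal N), Rel b (robust (ψ θ) w) (robust (σ θ) w) := by
  intro φ
  induction φ with
  | atom f =>
    intro b ψ σ h θ w
    simp only [Pre, Set.mem_insert_iff, Set.mem_singleton_iff, Prod.mk.injEq] at h
    rcases h with ⟨h1, h2⟩ | ⟨h1, h2⟩ | ⟨h1, h2⟩ <;> subst h1 <;> subst h2 <;>
      cases b <;> simp [Rel, robust, STL.top]
  | falsum =>
    intro b ψ σ h θ w
    simp only [Pre, Set.mem_singleton_iff, Prod.mk.injEq] at h
    obtain ⟨h1, h2⟩ := h; subst h1; subst h2; exact Rel.rfl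
  | not φ ih =>
    intro b ψ σ h θ w
    simp only [Pre, Set.mem_setOf_eq, Prod.mk.injEq] at h
    obtain ⟨q, hq, h1, h2⟩ := h
    exact Rel.neg' (ih (!b) _ _ hq θ w)
  | and φ₁ φ₂ ih₁ ih₂ =>
    intro b ψ σ h θ w
    simp only [Pre, Set.mem_setOf_eq, Prod.mk.injEq] at h
    obtain ⟨q₁, hq₁, q₂, hq₂, h1, h2⟩ := h; subst h1; subst h2
    exact Rel.min' (ih₁ b _ _ hq₁ θ.1 w) (ih₂ b _ _ hq₂ θ.2 w)
  | or φ₁ φ₂ ih₁ ih₂ =>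
    intro b ψ σ h θ w
    simp only [Pre, Set.mem_setOf_eq, Prod.mk.injEq] at h
    obtain ⟨q₁, hq₁, q₂, hq₂, h1, h2⟩ := h; subst h1; subst h2
    exact Rel.max' (ih₁ b _ _ hq₁ θ.1 w) (ih₂ b _ _ hq₂ θ.2 w)
  | always a b' k φ ih =>
    intro b ψ σ h θ w
    simp only [Pre, Set.mem_setOf_eq, Prod.mk.injEq] at h
    obtain ⟨ψ', σ', hps, h1, h2⟩ := h; subst h1; subst h2
    refine rel_iAnd fun i => ?_
    simp only [robust]
    exact Rel.iInf' fun t => ih b _ _ (hps i) θ.2 _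
  | event a b' k φ ih =>
    intro b ψ σ h θ w
    simp only [Pre, Set.mem_setOf_eq, Prod.mk.injEq] at h
    obtain ⟨ψ', σ', hps, h1, h2⟩ := h; subst h1; subst h2
    refine rel_iOr fun i => ?_
    simp only [robust]
    exact Rel.iSup' fun t => ih b _ _ (hps i) θ.2 _
  | untl a b' k φ₁ φ₂ ih₁ ih₂ =>
    intro b ψ σ h θ w
    simp only [Pre, Set.mem_setOf_eq, Prod.mk.injEq] at h
    obtain ⟨ψ', ψ'', σ', σ'', ξ', ξ'', hψ, hσ, hξ, h1, h2⟩ := h; subst h1; subst h2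
    refine rel_iOr fun i => ?_
    simp only [robust]
    refine Rel.min' (Rel.iSup' fun t => Rel.min' (ih₂ b _ _ (hσ i) θ.2.2 _)
      (Rel.iInf' fun t' => ih₁ b _ _ (hψ i) θ.2.1 _)) ?_
    exact rel_iAnd fun j => Rel.iInf' fun t => ih₁ b _ _ (hξ i _) θ.2.1 _

/-- Order identification for violation classes (Lemma 4, violation part):
if `(ψ, σ) ∈ ⪯⁻(φ)` then `V(ψ) ⊆ V(σ)`. -/
theorem pre_vio_inclusion {N : ℕ} (φ : AForm N) (hφ : φ.WF)
    (ψ σ : Val φ → STL N) (h : (ψ, σ) ∈ Pre false φ) :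
    VioSet φ ψ ⊆ VioSet φ σ := by
  intro w hw
  obtain ⟨θ, hθ⟩ := hw
  refine ⟨θ, ?_⟩
  have := pre_rel φ false ψ σ h θ w
  simp only [Rel, if_false, Bool.false_eq_true] at this
  exact lt_of_le_of_lt this hθ


end STLClass
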